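/- Let F : Fin n × Fin n × Fin n × Fin n → ℂ be a super-symmetric fourth-order tensor whose square unfolding matr(F) has rank r. Then F admits a symmetric CP decomposition with at most (n + 4n²)·r terms: there exist R ≤ (n + 4n²)·r and vectors b¹, …, b^R ∈ ℂ^n such that F(i,j,k,l) = Σ_{p=1}^{R} b^p(i)·b^p(j)·b^p(k)·b^p(l) for all indices. Combined with the reverse inequality, rank_M(F) ≤ rank_SCP(F) ≤ (n + 4n²)·rank_M(F). -/

import Mathlib

open Matrix Module

lemma exists_nonzero_quad {I : Type*} [Fintype I] [DecidableEq I]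
    {M : Matrix I I ℂ} (hs : M.IsSymm) (hM : M ≠ 0) :
    ∃ x : I → ℂ, x ⬝ᵥ M.mulVec x ≠ 0 := by
  by_contra h
  push_neg at h
  apply hM
  have hB : ∀ x y : I → ℂ, x ⬝ᵥ M.mulVec y + y ⬝ᵥ M.mulVec x = 0 := by
    intro x y
    have h1 := h (x + y)
    have h2 := h x
    have h3 := h y
    simp only [Matrix.mulVec_add, add_dotProduct, dotProduct_add] at h1
    linear_combination h1 - h2 - h3
  ext i j
  have hij := hB (Pi.single i 1) (Pi.single j 1)
  have hsym : M j i = M i j := hs.apply i j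
  simp only [Matrix.mulVec_single_one, single_dotProduct, Matrix.col_apply, one_mul, mul_one] at hij
  simp only [Matrix.zero_apply]
  linear_combination hij / 2 - hsym / 2

lemma symm_rank_decomp {I : Type*} [Fintype I] [DecidableEq I] :
    ∀ (r : ℕ) (M : Matrix I I ℂ), M.IsSymm → M.rank = r →
      ∃ g : Fin r → I → ℂ, (∀ p, ∃ c, g p = M.mulVec c) ∧
        ∀ i j, M i j = ∑ p, g p i * g p j := by
  intro r
  induction r with
  | zero =>
    intro M hs hr
    have hM : M = 0 := by
      unfold Matrix.rank at hr
      have hbot : LinearMap.range M.mulVecLin = ⊥ := Submodule.finrank_eq_zero.mp hr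
      have h0 : M.mulVecLin = 0 := LinearMap.range_eq_bot.mp hbot
      ext i j
      have := congrFun (LinearMap.congr_fun h0 (Pi.single j 1)) i
      simpa [Matrix.mulVecLin_apply, Matrix.mulVec_single] using this
    exact ⟨fun p => p.elim0, fun p => p.elim0, fun i j => by simp [hM]⟩
  | succ r ih =>
    intro M hs hr
    have hM0 : M ≠ 0 := by rintro rfl; simp at hr
    obtain ⟨x, hx⟩ := exists_nonzero_quad hs hM0
    set q : ℂ := x ⬝ᵥ M.mulVec x with hq
    set v : I → ℂ := M.mulVec x with hv
    set M' : Matrix I I ℂ := M - q⁻¹ • Matrix.vecMulVec v v with hM'def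
    have hM'entry : ∀ i j, M' i j = M i j - q⁻¹ * (v i * v j) := by
      intro i j
      simp [hM'def, Matrix.vecMulVec_apply, mul_assoc]
    have hs' : M'.IsSymm := by
      ext i j
      rw [Matrix.transpose_apply, hM'entry, hM'entry, hs.apply]
      ring
    have hvx : v ⬝ᵥ x = q := by rw [dotProduct_comm]
    have hMdot : ∀ y z : I → ℂ, y ⬝ᵥ M.mulVec z = M.mulVec y ⬝ᵥ z := by
      intro y z
      rw [Matrix.dotProduct_mulVec, ← Matrix.mulVec_transpose, hs]
    have hM'eq : ∀ y, M'.mulVec y = M.mulVec y - (q⁻¹ * (v ⬝ᵥ y)) • v := by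
      intro y
      funext i
      rw [hM'def]
      simp only [Matrix.sub_mulVec, Matrix.smul_mulVec, Pi.sub_apply, Pi.smul_apply,
        smul_eq_mul]
      have : (Matrix.vecMulVec v v).mulVec y i = v i * (v ⬝ᵥ y) := by
        simp only [Matrix.mulVec, Matrix.vecMulVec_apply, dotProduct, Finset.mul_sum]
        exact Finset.sum_congr rfl fun j _ => by ring
      rw [this]; ring
    have hM'eq2 : ∀ y, M'.mulVec y = M.mulVec (y - (q⁻¹ * (v ⬝ᵥ y)) • x) := by
      intro y
      rw [Matrix.mulVec_sub, Matrix.mulVec_smul, hM'eq, ← hv]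
    have hxker : M'.mulVec x = 0 := by
      rw [hM'eq2, hvx, inv_mul_cancel₀ hx, one_smul, sub_self, Matrix.mulVec_zero]
    have hvne : v ≠ 0 := by
      intro h0
      apply hx
      rw [hq, h0, dotProduct_zero]
    -- rank of M' is r
    have hrank' : M'.rank = r := by
      have hker : LinearMap.ker M.mulVecLin < LinearMap.ker M'.mulVecLin := by
        constructor
        · intro y hy
          simp only [SetLike.mem_coe, LinearMap.mem_ker, Matrix.mulVecLin_apply] at hy ⊢
          have hvy : v ⬝ᵥ y = 0 := by
            rw [hv, ← hMdot, hy, dotProduct_zero]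
          rw [hM'eq, hvy, hy, mul_zero, zero_smul, sub_zero]
        · intro hle
          have hxk : x ∈ LinearMap.ker M'.mulVecLin :=
            LinearMap.mem_ker.mpr ((Matrix.mulVecLin_apply _ _).trans hxker)
          have := hle hxk
          simp only [LinearMap.mem_ker, Matrix.mulVecLin_apply] at this
          exact hvne this
      have hrange1 : LinearMap.range M'.mulVecLin ≤ LinearMap.range M.mulVecLin := by
        rintro _ ⟨y, rfl⟩
        exact ⟨y - (q⁻¹ * (v ⬝ᵥ y)) • x, (hM'eq2 y).symm⟩
      have hrange2 : LinearMap.range M.mulVecLin ≤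
          LinearMap.range M'.mulVecLin ⊔ Submodule.span ℂ {v} := by
        rintro _ ⟨y, rfl⟩
        have : M.mulVec y = M'.mulVec y + (q⁻¹ * (v ⬝ᵥ y)) • v := by
          rw [hM'eq]; abel
        rw [Matrix.mulVecLin_apply, this]
        exact Submodule.add_mem_sup (LinearMap.mem_range_self _ y)
          (Submodule.smul_mem _ _ (Submodule.mem_span_singleton_self v))
      have hk : finrank ℂ (LinearMap.ker M.mulVecLin) < finrank ℂ (LinearMap.ker M'.mulVecLin) :=
        Submodule.finrank_lt_finrank_of_lt hker
      have hrn : M.rank + finrank ℂ (LinearMap.ker M.mulVecLin) = Fintype.card I := by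
        unfold Matrix.rank
        rw [LinearMap.finrank_range_add_finrank_ker M.mulVecLin, Module.finrank_pi]
      have hrn' : M'.rank + finrank ℂ (LinearMap.ker M'.mulVecLin) = Fintype.card I := by
        unfold Matrix.rank
        rw [LinearMap.finrank_range_add_finrank_ker M'.mulVecLin, Module.finrank_pi]
      have hub : M'.rank ≤ r := by omega
      have hlb : r ≤ M'.rank := by
        have h1 : M.rank ≤ finrank ℂ ↥(LinearMap.range M'.mulVecLin ⊔ Submodule.span ℂ {v}) := by
          unfold Matrix.rank
          exact Submodule.finrank_mono hrange2
        have h2 : finrank ℂ ↥(LinearMap.range M'.mulVecLin ⊔ Submodule.span ℂ {v}) ≤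
            M'.rank + finrank ℂ (Submodule.span ℂ {v}) := by
          unfold Matrix.rank
          have := Submodule.finrank_sup_add_finrank_inf_eq
            (LinearMap.range M'.mulVecLin) (Submodule.span ℂ {v})
          omega
        have h3 : finrank ℂ ↥(Submodule.span ℂ ({v} : Set (I → ℂ))) = 1 :=
          finrank_span_singleton hvne
        omega
      omega
    obtain ⟨g', hg'mem, hg'⟩ := ih M' hs' hrank'
    set c₀ : ℂ := (q⁻¹) ^ (((2 : ℕ) : ℂ)⁻¹) with hc₀def
    have hc₀ : c₀ ^ (2 : ℕ) = q⁻¹ := Complex.cpow_nat_inv_pow _ two_ne_zero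
    refine ⟨Fin.cons (c₀ • v) g', ?_, ?_⟩
    · intro p
      refine Fin.cases ?_ ?_ p
      · exact ⟨c₀ • x, by rw [Fin.cons_zero, Matrix.mulVec_smul, hv]⟩
      · intro p'
        obtain ⟨c, hc⟩ := hg'mem p'
        exact ⟨c - (q⁻¹ * (v ⬝ᵥ c)) • x, by rw [Fin.cons_succ, hc, hM'eq2]⟩
    · intro i j
      rw [Fin.sum_univ_succ]
      simp only [Fin.cons_zero, Fin.cons_succ, Pi.smul_apply, smul_eq_mul]
      rw [← hg' i j, hM'entry]
      have : c₀ * v i * (c₀ * v j) = q⁻¹ * (v i * v j) := by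
        have : c₀ * c₀ = q⁻¹ := by rw [← hc₀]; ring
        linear_combination v i * v j * this
      rw [this]; ring

/-- padding a decomposition indexed by `Fin m` (`m ≤ n`) to one indexed by `Fin n`. -/
lemma pad_decomp {n m : ℕ} (hle : m ≤ n) (w0 : Fin m → Fin n → ℂ) :
    ∃ w : Fin n → Fin n → ℂ, ∀ i j : Fin n,
      (∑ s : Fin m, w0 s i * w0 s j) = ∑ s : Fin n, w s i * w s j := by
  refine ⟨fun s => if h : (s : ℕ) < m then w0 ⟨s, h⟩ else 0, fun i j => ?_⟩
  rw [Fin.sum_univ_eq_sum_range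
      (fun q => (if h : q < m then w0 ⟨q, h⟩ else 0) i * (if h : q < m then w0 ⟨q, h⟩ else 0) j) n]
  have lhs_eq : (∑ s : Fin m, w0 s i * w0 s j) = ∑ q ∈ Finset.range m,
      (if h : q < m then w0 ⟨q, h⟩ else 0) i * (if h : q < m then w0 ⟨q, h⟩ else 0) j := by
    rw [← Fin.sum_univ_eq_sum_range
      (fun q => (if h : q < m then w0 ⟨q, h⟩ else 0) i * (if h : q < m then w0 ⟨q, h⟩ else 0) j) m]
    refine Finset.sum_congr rfl fun s _ => ?_
    rw [dif_pos s.isLt]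
  rw [lhs_eq]
  refine Finset.sum_subset (Finset.range_subset_range.mpr hle) fun q _ hq => ?_
  rw [dif_neg (by simpa using hq)]
  simp

/-- If a super-symmetric fourth-order tensor `F` has square unfolding of rank `r`, then `F`
admits a symmetric CP decomposition with at most `(n + 4n²)·r` terms; combined with the
reverse inequality, `rank_M(F) ≤ rank_SCP(F) ≤ (n + 4n²)·rank_M(F)`. -/
theorem stmt_16 {n r : ℕ}
    (F : Fin n × Fin n × Fin n × Fin n → ℂ)
    (hsym : ∀ σ : Equiv.Perm (Fin 4), ∀ i : Fin 4 → Fin n,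
      F (i (σ 0), i (σ 1), i (σ 2), i (σ 3)) = F (i 0, i 1, i 2, i 3))
    (hrank : (Matrix.of fun p q : Fin n × Fin n => F (p.1, p.2, q.1, q.2)).rank = r) :
    (∃ R : ℕ, R ≤ (n + 4 * n ^ 2) * r ∧
      ∃ b : Fin R → Fin n → ℂ,
        ∀ i j k l : Fin n, F (i, j, k, l) = ∑ p, b p i * b p j * b p k * b p l) ∧
    r ≤ sInf {s : ℕ | ∃ b : Fin s → Fin n → ℂ,
        ∀ i j k l : Fin n, F (i, j, k, l) = ∑ p, b p i * b p j * b p k * b p l} ∧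
    sInf {s : ℕ | ∃ b : Fin s → Fin n → ℂ,
        ∀ i j k l : Fin n, F (i, j, k, l) = ∑ p, b p i * b p j * b p k * b p l}
      ≤ (n + 4 * n ^ 2) * r := by
  classical
  have hswap : ∀ i j k l : Fin n, F (j,i,k,l) = F (i,j,k,l) ∧ F (i,k,j,l) = F (i,j,k,l)
      ∧ F (i,l,k,j) = F (i,j,k,l) ∧ F (k,l,i,j) = F (i,j,k,l) := by
    intro i j k l
    have h1 := hsym (Equiv.swap 0 1) ![i,j,k,l]
    have h2 := hsym (Equiv.swap 1 2) ![i,j,k,l]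
    have h3 := hsym (Equiv.swap 1 3) ![i,j,k,l]
    have h4 := hsym (Equiv.swap 0 2 * Equiv.swap 1 3) ![i,j,k,l]
    simp only [show Equiv.swap (0:Fin 4) 1 0 = 1 by decide, show Equiv.swap (0:Fin 4) 1 1 = 0 by decide,
      show Equiv.swap (0:Fin 4) 1 2 = 2 by decide, show Equiv.swap (0:Fin 4) 1 3 = 3 by decide,
      show Equiv.swap (1:Fin 4) 2 0 = 0 by decide, show Equiv.swap (1:Fin 4) 2 1 = 2 by decide,
      show Equiv.swap (1:Fin 4) 2 2 = 1 by decide, show Equiv.swap (1:Fin 4) 2 3 = 3 by decide,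
      show Equiv.swap (1:Fin 4) 3 0 = 0 by decide, show Equiv.swap (1:Fin 4) 3 1 = 3 by decide,
      show Equiv.swap (1:Fin 4) 3 2 = 2 by decide, show Equiv.swap (1:Fin 4) 3 3 = 1 by decide,
      show (Equiv.swap (0:Fin 4) 2 * Equiv.swap 1 3 : Equiv.Perm (Fin 4)) 0 = 2 by decide,
      show (Equiv.swap (0:Fin 4) 2 * Equiv.swap 1 3 : Equiv.Perm (Fin 4)) 1 = 3 by decide,
      show (Equiv.swap (0:Fin 4) 2 * Equiv.swap 1 3 : Equiv.Perm (Fin 4)) 2 = 0 by decide,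
      show (Equiv.swap (0:Fin 4) 2 * Equiv.swap 1 3 : Equiv.Perm (Fin 4)) 3 = 1 by decide,
      Matrix.cons_val_zero, Matrix.cons_val_one, Matrix.head_cons, Matrix.cons_val_two,
      Matrix.tail_cons, Matrix.cons_val_three] at h1 h2 h3 h4
    exact ⟨h1, h2, h3, h4⟩
  set M : Matrix (Fin n × Fin n) (Fin n × Fin n) ℂ :=
    Matrix.of (fun p q : Fin n × Fin n => F (p.1, p.2, q.1, q.2)) with hMdef
  have hMsymm : M.IsSymm := by
    ext ⟨i,j⟩ ⟨k,l⟩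
    exact (hswap i j k l).2.2.2
  obtain ⟨g, hgmem, hg⟩ := symm_rank_decomp r M hMsymm hrank
  have hdec : ∀ p : Fin r, ∃ w : Fin n → Fin n → ℂ,
      ∀ i j, g p (i, j) = ∑ s : Fin n, w s i * w s j := by
    intro p
    set G : Matrix (Fin n) (Fin n) ℂ := Matrix.of (fun i j => g p (i, j)) with hGdef
    have hGs : G.IsSymm := by
      ext i j
      show g p (j, i) = g p (i, j)
      obtain ⟨c, hc⟩ := hgmem p
      rw [hc]
      simp only [Matrix.mulVec, dotProduct]
      refine Finset.sum_congr rfl fun z _ => ?_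
      show M (j, i) z * c z = M (i, j) z * c z
      have hz : M (j, i) z = M (i, j) z := (hswap i j z.1 z.2).1
      rw [hz]
    obtain ⟨w0, -, hw0⟩ := symm_rank_decomp G.rank G hGs rfl
    have hle : G.rank ≤ n := le_trans (Matrix.rank_le_card_width G) (by simp)
    obtain ⟨w, hww⟩ := pad_decomp hle w0
    exact ⟨w, fun i j => by rw [show g p (i,j) = G i j from rfl, hw0 i j, hww i j]⟩
  choose w hw using hdec
  have hF : ∀ i j k l : Fin n,
      F (i,j,k,l) = ∑ p, ∑ s, ∑ t, w p s i * w p s j * (w p t k * w p t l) := by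
    intro i j k l
    have h0 : F (i,j,k,l) = M (i,j) (k,l) := rfl
    rw [h0, hg (i,j) (k,l)]
    refine Finset.sum_congr rfl fun p _ => ?_
    rw [hw p i j, hw p k l, Finset.sum_mul_sum]
  set γ : ℂ := ((12:ℂ)⁻¹) ^ (((4:ℕ):ℂ))⁻¹ with hγdef
  set δ : ℂ := (-(6:ℂ)⁻¹) ^ (((4:ℕ):ℂ))⁻¹ with hδdef
  have hγ : γ ^ (4:ℕ) = (12:ℂ)⁻¹ := Complex.cpow_nat_inv_pow _ (by norm_num)
  have hδ : δ ^ (4:ℕ) = -(6:ℂ)⁻¹ := Complex.cpow_nat_inv_pow _ (by norm_num)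
  set c : (Fin r × Fin n × Fin n × Fin 4) → Fin n → ℂ := fun z =>
    ![γ • (w z.1 z.2.1 + w z.1 z.2.2.1), γ • (w z.1 z.2.1 - w z.1 z.2.2.1),
      δ • w z.1 z.2.1, δ • w z.1 z.2.2.1] z.2.2.2 with hcdef
  have hmain : ∀ i j k l : Fin n,
      F (i,j,k,l) = ∑ z : Fin r × Fin n × Fin n × Fin 4, c z i * c z j * c z k * c z l := by
    intro i j k l
    have e1 := hF i j k l
    have e1' : F (i,j,k,l) = ∑ p, ∑ s, ∑ t, w p t i * w p t j * (w p s k * w p s l) := by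
      rw [hF i j k l]
      exact Finset.sum_congr rfl fun p _ => Finset.sum_comm
    have e2 : F (i,j,k,l) = ∑ p, ∑ s, ∑ t, w p s i * w p s k * (w p t j * w p t l) := by
      rw [← (hswap i j k l).2.1]; exact hF i k j l
    have e2' : F (i,j,k,l) = ∑ p, ∑ s, ∑ t, w p t i * w p t k * (w p s j * w p s l) := by
      rw [e2]; exact Finset.sum_congr rfl fun p _ => Finset.sum_comm
    have e3 : F (i,j,k,l) = ∑ p, ∑ s, ∑ t, w p s i * w p s l * (w p t k * w p t j) := by
      rw [← (hswap i j k l).2.2.1]; exact hF i l k j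
    have e3' : F (i,j,k,l) = ∑ p, ∑ s, ∑ t, w p t i * w p t l * (w p s k * w p s j) := by
      rw [e3]; exact Finset.sum_congr rfl fun p _ => Finset.sum_comm
    have hterm : ∀ (p : Fin r) (s t : Fin n),
        (∑ m : Fin 4, c (p, s, t, m) i * c (p, s, t, m) j * c (p, s, t, m) k * c (p, s, t, m) l)
          = (6:ℂ)⁻¹ * (w p s i * w p s j * (w p t k * w p t l)
            + w p t i * w p t j * (w p s k * w p s l)
            + (w p s i * w p s k * (w p t j * w p t l)
            + w p t i * w p t k * (w p s j * w p s l))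
            + (w p s i * w p s l * (w p t k * w p t j)
            + w p t i * w p t l * (w p s k * w p s j))) := by
      intro p s t
      rw [Fin.sum_univ_four]
      simp only [hcdef, Matrix.cons_val_zero, Matrix.cons_val_one, Matrix.head_cons,
        Matrix.cons_val_two, Matrix.tail_cons, Matrix.cons_val_three, Pi.smul_apply,
        Pi.add_apply, Pi.sub_apply, smul_eq_mul]
      linear_combination ((w p s i + w p t i)*(w p s j + w p t j)*(w p s k + w p t k)*(w p s l + w p t l)
          + (w p s i - w p t i)*(w p s j - w p t j)*(w p s k - w p t k)*(w p s l - w p t l)) * hγ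
        + (w p s i * w p s j * w p s k * w p s l + w p t i * w p t j * w p t k * w p t l) * hδ
    have hsplit : ∑ z : Fin r × Fin n × Fin n × Fin 4, c z i * c z j * c z k * c z l
        = ∑ p, ∑ s, ∑ t,
            (∑ m : Fin 4, c (p, s, t, m) i * c (p, s, t, m) j * c (p, s, t, m) k
              * c (p, s, t, m) l) := by
      rw [Fintype.sum_prod_type]
      exact Finset.sum_congr rfl fun p _ => by
        rw [Fintype.sum_prod_type]
        exact Finset.sum_congr rfl fun s _ => by rw [Fintype.sum_prod_type]
    rw [hsplit]
    have : ∑ p, ∑ s, ∑ t,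
        (∑ m : Fin 4, c (p, s, t, m) i * c (p, s, t, m) j * c (p, s, t, m) k
          * c (p, s, t, m) l)
        = (6:ℂ)⁻¹ * ((∑ p, ∑ s, ∑ t, w p s i * w p s j * (w p t k * w p t l))
          + (∑ p, ∑ s, ∑ t, w p t i * w p t j * (w p s k * w p s l))
          + ((∑ p, ∑ s, ∑ t, w p s i * w p s k * (w p t j * w p t l))
          + (∑ p, ∑ s, ∑ t, w p t i * w p t k * (w p s j * w p s l)))
          + ((∑ p, ∑ s, ∑ t, w p s i * w p s l * (w p t k * w p t j))
          + (∑ p, ∑ s, ∑ t, w p t i * w p t l * (w p s k * w p s j)))) := by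
      simp only [hterm, ← Finset.mul_sum, Finset.sum_add_distrib]
    rw [this, ← e1, ← e1', ← e2, ← e2', ← e3, ← e3']
    ring
  -- package into Fin R
  set R : ℕ := r * (n * (n * 4)) with hRdef
  have hcard : Fintype.card (Fin r × Fin n × Fin n × Fin 4) = R := by
    simp [Fintype.card_prod, hRdef]
  set e : Fin R ≃ (Fin r × Fin n × Fin n × Fin 4) := (Fintype.equivFinOfCardEq hcard).symm
  set b : Fin R → Fin n → ℂ := fun p => c (e p) with hbdef
  have hb : ∀ i j k l : Fin n, F (i, j, k, l) = ∑ p, b p i * b p j * b p k * b p l := by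
    intro i j k l
    rw [hmain i j k l]
    exact (Equiv.sum_comp e fun z => c z i * c z j * c z k * c z l).symm
  have hRle : R ≤ (n + 4 * n ^ 2) * r := by
    have : r * (n * (n * 4)) = 4 * n ^ 2 * r := by ring
    rw [hRdef, this]
    exact Nat.mul_le_mul_right r (by nlinarith)
  have hmemS : R ∈ {s : ℕ | ∃ b : Fin s → Fin n → ℂ,
      ∀ i j k l : Fin n, F (i, j, k, l) = ∑ p, b p i * b p j * b p k * b p l} := ⟨b, hb⟩
  refine ⟨⟨R, hRle, b, hb⟩, ?_, le_trans (Nat.sInf_le hmemS) hRle⟩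
  refine le_csInf ⟨R, hmemS⟩ ?_
  rintro s ⟨b', hb'⟩
  set A : Matrix (Fin n × Fin n) (Fin s) ℂ :=
    Matrix.of (fun (p : Fin n × Fin n) (t : Fin s) => b' t p.1 * b' t p.2) with hAdef
  have hMA : M = A * Aᵀ := by
    ext ⟨i,j⟩ ⟨k,l⟩
    show F (i,j,k,l) = _
    rw [Matrix.mul_apply, hb' i j k l]
    refine Finset.sum_congr rfl fun t _ => ?_
    show b' t i * b' t j * b' t k * b' t l = (b' t i * b' t j) * (b' t k * b' t l)
    ring
  calc r = M.rank := hrank.symm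
    _ ≤ A.rank := by rw [hMA]; exact Matrix.rank_mul_le_left A Aᵀ
    _ ≤ Fintype.card (Fin s) := Matrix.rank_le_card_width A
    _ = s := Fintype.card_fin s
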